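/- Let γ ∈ (0,1] and let w : [0,∞) → [0,∞) be continuous and satisfy w(t₂) − w(t₁) ≤ (1−γ)(t₂ − t₁) for all 0 ≤ t₁ ≤ t₂. Then for every t ≥ 0 there exists a unique x ≥ 0 such that x = w(t + x). -/

import Mathlib

/-- Existence and uniqueness of the fluid potential waiting time: for each `t ≥ 0`
there is a unique `x ≥ 0` with `x = w(t + x)`. -/
theorem pwt_exists_unique
    (γ : ℝ) (hγ : γ ∈ Set.Ioc (0:ℝ) 1)
    (w : ℝ → ℝ)
    (hw_nonneg : ∀ t, 0 ≤ t → 0 ≤ w t)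
    (hw_cont : ContinuousOn w (Set.Ici (0:ℝ)))
    (hw_growth : ∀ t₁ t₂, 0 ≤ t₁ → t₁ ≤ t₂ → w t₂ - w t₁ ≤ (1 - γ) * (t₂ - t₁)) :
    ∀ t, 0 ≤ t → ∃! x : ℝ, 0 ≤ x ∧ x = w (t + x) := by
  intro t ht
  obtain ⟨hγ0, hγ1⟩ := hγ
  set g : ℝ → ℝ := fun x => w (t + x) - x with hg
  have hgcont : ContinuousOn g (Set.Ici (0:ℝ)) := by
    apply ContinuousOn.sub
    · apply hw_cont.comp (continuous_const.add continuous_id).continuousOn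
      intro x hx
      exact add_nonneg ht hx
    · exact continuousOn_id
  set M : ℝ := w t / γ with hM
  have hM0 : 0 ≤ M := div_nonneg (hw_nonneg t ht) hγ0.le
  have hg0 : 0 ≤ g 0 := by simpa [g] using hw_nonneg (t + 0) (by simpa using ht)
  have hgM : g M ≤ 0 := by
    have h := hw_growth t (t + M) ht (by linarith)
    have : w (t + M) - w t ≤ (1 - γ) * M := by simpa using h
    have hwt : γ * M = w t := by
      rw [hM]; exact mul_div_cancel₀ (w t) hγ0.ne'
    simp only [g]
    nlinarith
  have h0 : (0:ℝ) ∈ Set.Icc (g M) (g 0) := ⟨hgM, hg0⟩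
  have := intermediate_value_Icc' hM0 (hgcont.mono (Set.Icc_subset_Ici_self)) h0
  obtain ⟨x, hx, hgx⟩ := this
  refine ⟨x, ⟨hx.1, by simp only [g] at hgx; linarith⟩, ?_⟩
  rintro y ⟨hy0, hyfix⟩
  have hx0 := hx.1
  have hxfix : x = w (t + x) := by simp only [g] at hgx; linarith
  by_contra hne
  rcases lt_or_gt_of_ne hne with hlt | hlt
  · have h := hw_growth (t + y) (t + x) (by linarith) (by linarith)
    rw [← hxfix, ← hyfix] at h
    nlinarith
  · have h := hw_growth (t + x) (t + y) (by linarith) (by linarith)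
    rw [← hxfix, ← hyfix] at h
    nlinarith
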